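/- Let T be a finite abelian p-group for a prime p, let π : F → T be a surjection from a finitely generated free abelian group F, and let h : T → T be an automorphism. Then there exists an endomorphism f : F → F with π ∘ f = h ∘ π and such that p does not divide det f. -/

import Mathlib

open Function

lemma lemA {𝕜 V W : Type*} [Field 𝕜] [AddCommGroup V] [Module 𝕜 V]
    [AddCommGroup W] [Module 𝕜 W] (φ : V →ₗ[𝕜] W) (hφ : Surjective φ)
    (g : W ≃ₗ[𝕜] W) : ∃ F : V ≃ₗ[𝕜] V, ∀ v, φ (F v) = g (φ v) := by
  obtain ⟨C, hC⟩ := Submodule.exists_isCompl (LinearMap.ker φ)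
  set φC : C →ₗ[𝕜] W := φ ∘ₗ C.subtype with hφC
  have hinj : Injective φC := by
    rw [← LinearMap.ker_eq_bot]
    ext ⟨x, hx⟩
    simp only [LinearMap.mem_ker, Submodule.mem_bot, hφC, LinearMap.comp_apply,
      Submodule.subtype_apply, Submodule.mk_eq_zero]
    exact ⟨fun hx0 => (Submodule.disjoint_def.mp hC.disjoint) x hx0 hx, fun h => by rw [h]; exact map_zero φ⟩
  have hsurj : Surjective φC := by
    intro w
    obtain ⟨v, hv⟩ := hφ w
    have hv' : v ∈ LinearMap.ker φ ⊔ C := by rw [hC.sup_eq_top]; trivial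
    obtain ⟨k, hk, c, hc, rfl⟩ := Submodule.mem_sup.mp hv'
    exact ⟨⟨c, hc⟩, by simpa [hφC, LinearMap.mem_ker.mp hk] using hv⟩
  let eW : C ≃ₗ[𝕜] W := LinearEquiv.ofBijective φC ⟨hinj, hsurj⟩
  let e : (LinearMap.ker φ × C) ≃ₗ[𝕜] V := Submodule.prodEquivOfIsCompl _ _ hC
  let Big : V ≃ₗ[𝕜] V := e.symm.trans (((LinearEquiv.refl 𝕜 (LinearMap.ker φ)).prodCongr
      (eW.trans (g.trans eW.symm))).trans e)
  refine ⟨Big, fun v => ?_⟩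
  obtain ⟨⟨k, c⟩, rfl⟩ := e.surjective v
  have he : ∀ k c, e (k, c) = (k : V) + (c : V) := fun k c => rfl
  have hφk : φ (k : V) = 0 := k.2
  have hφc : ∀ c : C, φ (c : V) = eW c := fun c => rfl
  have h1 : Big (e (k, c)) = e (k, eW.symm (g (eW c))) := by
    simp only [Big, LinearEquiv.trans_apply, LinearEquiv.symm_apply_apply,
      LinearEquiv.prodCongr_apply, LinearEquiv.refl_apply]
  rw [h1, he, he, map_add, map_add, hφk, zero_add, zero_add, hφc, hφc,
    LinearEquiv.apply_symm_apply]

/-- Let `T` be a finite abelian `p`-group (`p` prime), `π : F → T` a surjection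
from the finitely generated free abelian group `F = Fin n → ℤ`, and `h : T → T` an automorphism.
Then there is an endomorphism `f` of `F` lifting `h` (i.e. `π ∘ f = h ∘ π`) whose determinant is
not divisible by `p`. -/
theorem stmt_2 (p : ℕ) (hp : p.Prime) (n : ℕ) (T : Type) [AddCommGroup T] [Fintype T]
    (hT : ∀ x : T, ∃ k : ℕ, (p ^ k : ℕ) • x = 0)
    (π : (Fin n → ℤ) →+ T) (hπ : Function.Surjective π)
    (h : T ≃+ T) :
    ∃ f : (Fin n → ℤ) →ₗ[ℤ] (Fin n → ℤ),
      (∀ v, π (f v) = h (π v)) ∧ ¬ (p : ℤ) ∣ LinearMap.det f := by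
  haveI : Fact p.Prime := ⟨hp⟩
  -- the submodule pT and the quotient T/pT
  set S : Submodule ℤ T := LinearMap.range ((p : ℤ) • (LinearMap.id : T →ₗ[ℤ] T)) with hS
  have hpS : ∀ t : T, (p : ℤ) • t ∈ S := fun t => ⟨t, rfl⟩
  haveI : Module (ZMod p) (T ⧸ S) := AddCommGroup.zmodModule (by
    intro x
    obtain ⟨t, rfl⟩ := Submodule.Quotient.mk_surjective S x
    have : p • (Submodule.Quotient.mk t : T ⧸ S) = Submodule.Quotient.mk ((p : ℤ) • t) := by
      rw [← Submodule.Quotient.mk_smul, natCast_zsmul]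
    rw [this, Submodule.Quotient.mk_eq_zero]
    exact hpS t)
  -- reduction mod p
  set r : (Fin n → ℤ) → (Fin n → ZMod p) := fun x i => ((x i : ℤ) : ZMod p) with hr
  have hradd : ∀ x y, r (x + y) = r x + r y := by
    intro x y; funext i; simp [hr]
  have hrsurj : Surjective r := by
    intro v
    refine ⟨fun i => ((v i).val : ℤ), funext fun i => ?_⟩
    simp [hr, ZMod.natCast_val, ZMod.intCast_cast, ZMod.cast_id]
  -- the map φ : (ZMod p)^n → T/pT
  set φ : (Fin n → ZMod p) →ₗ[ZMod p] (T ⧸ S) :=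
    (Pi.basisFun (ZMod p) (Fin n)).constr ℕ (fun j => S.mkQ (π (Pi.single j 1))) with hφdef
  have hφsingle : ∀ j : Fin n, φ (Pi.single j 1) = S.mkQ (π (Pi.single j 1)) := by
    intro j
    have : (Pi.single j 1 : Fin n → ZMod p) = Pi.basisFun (ZMod p) (Fin n) j := by
      simp [Pi.basisFun_apply]
    rw [this, hφdef, Module.Basis.constr_basis]
  have hφr : ∀ x, φ (r x) = S.mkQ (π x) := by
    have key : (AddMonoidHom.mk' (fun x => φ (r x)) (by intro a b; show φ (r (a + b)) = φ (r a) + φ (r b); rw [hradd, map_add]))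
        = (S.mkQ.toAddMonoidHom.comp π) := by
      apply AddMonoidHom.functions_ext
      intro j m
      simp only [AddMonoidHom.mk'_apply, AddMonoidHom.comp_apply,
        LinearMap.toAddMonoidHom_coe]
      have h1 : r (Pi.single j m) = (m : ZMod p) • (Pi.single j 1 : Fin n → ZMod p) := by
        funext i
        by_cases hij : i = j
        · subst hij; simp [hr]
        · simp [hr, Pi.single_eq_of_ne hij]
      have h2 : (Pi.single j m : Fin n → ℤ) = m • Pi.single j 1 := by
        funext i
        by_cases hij : i = j
        · subst hij; simp
        · simp [Pi.single_eq_of_ne hij]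
      rw [h1, map_smul, hφsingle, h2, map_zsmul, Int.cast_smul_eq_zsmul, map_zsmul]
    intro x
    exact DFunLike.congr_fun key x
  have hφsurj : Surjective φ := by
    intro y
    obtain ⟨t, rfl⟩ := Submodule.Quotient.mk_surjective S y
    obtain ⟨x, rfl⟩ := hπ t
    exact ⟨r x, hφr x⟩
  -- the induced automorphism of T/pT
  have hle : S ≤ S.comap h.toAddMonoidHom.toIntLinearMap := by
    rintro _ ⟨t, rfl⟩
    refine Submodule.mem_comap.mpr ?_
    have : h.toAddMonoidHom.toIntLinearMap (((p : ℤ) • (LinearMap.id : T →ₗ[ℤ] T)) t) = (p : ℤ) • h t := by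
      simp
    rw [this]; exact hpS _
  have hle' : S ≤ S.comap h.symm.toAddMonoidHom.toIntLinearMap := by
    rintro _ ⟨t, rfl⟩
    refine Submodule.mem_comap.mpr ?_
    have : h.symm.toAddMonoidHom.toIntLinearMap (((p : ℤ) • (LinearMap.id : T →ₗ[ℤ] T)) t) = (p : ℤ) • h.symm t := by
      simp
    rw [this]; exact hpS _
  set q1 : (T ⧸ S) →ₗ[ZMod p] (T ⧸ S) :=
    (Submodule.mapQ S S h.toAddMonoidHom.toIntLinearMap hle).toAddMonoidHom.toZModLinearMap p with hq1
  set q2 : (T ⧸ S) →ₗ[ZMod p] (T ⧸ S) :=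
    (Submodule.mapQ S S h.symm.toAddMonoidHom.toIntLinearMap hle').toAddMonoidHom.toZModLinearMap p with hq2
  have hq1mk : ∀ t : T, q1 (S.mkQ t) = S.mkQ (h t) := by
    intro t; simp [hq1, Submodule.mapQ_apply]
  have hq2mk : ∀ t : T, q2 (S.mkQ t) = S.mkQ (h.symm t) := by
    intro t; simp [hq2, Submodule.mapQ_apply]
  set hbar : (T ⧸ S) ≃ₗ[ZMod p] (T ⧸ S) := LinearEquiv.ofLinear q1 q2
    (by
      apply LinearMap.ext
      intro y
      obtain ⟨t, rfl⟩ := Submodule.Quotient.mk_surjective S y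
      rw [← Submodule.mkQ_apply, LinearMap.comp_apply, hq2mk, hq1mk]
      simp)
    (by
      apply LinearMap.ext
      intro y
      obtain ⟨t, rfl⟩ := Submodule.Quotient.mk_surjective S y
      rw [← Submodule.mkQ_apply, LinearMap.comp_apply, hq1mk, hq2mk]
      simp) with hhbar
  have hhbarmk : ∀ t : T, hbar (S.mkQ t) = S.mkQ (h t) := by
    intro t; rw [hhbar]; exact hq1mk t
  -- the invertible lift of hbar at the mod-p level
  obtain ⟨F, hF⟩ := lemA φ hφsurj hbar
  -- kernel of φ is the image of ker π
  have hker : ∀ v : Fin n → ZMod p, φ v = 0 → ∃ κ, π κ = 0 ∧ r κ = v := by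
    intro v hv
    obtain ⟨x, rfl⟩ := hrsurj v
    rw [hφr, Submodule.mkQ_apply, Submodule.Quotient.mk_eq_zero] at hv
    obtain ⟨t, ht⟩ := hv
    obtain ⟨y, rfl⟩ := hπ t
    refine ⟨x - (p : ℤ) • y, ?_, ?_⟩
    · have : ((p : ℤ) • (LinearMap.id : T →ₗ[ℤ] T)) (π y) = π ((p : ℤ) • y) := by
        rw [LinearMap.smul_apply, LinearMap.id_apply, ← map_zsmul π]
      rw [map_sub, ← ht, this, sub_self]

    · funext i
      have : (x - (p : ℤ) • y) i = x i - (p : ℤ) * y i := by simp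
      simp only [hr, this]
      push_cast
      simp [ZMod.natCast_self]
  -- choose the lift columns
  have hchoice : ∀ j : Fin n, ∃ c : Fin n → ℤ,
      π c = h (π (Pi.single j 1)) ∧ r c = F (Pi.single j 1) := by
    intro j
    obtain ⟨w, hw⟩ := hπ (h (π (Pi.single j 1)))
    have hzero : φ (F (Pi.single j 1) - r w) = 0 := by
      rw [map_sub, hF, hφsingle, hhbarmk, hφr, hw, sub_self]
    obtain ⟨κ, hκ1, hκ2⟩ := hker _ hzero
    refine ⟨w + κ, ?_, ?_⟩
    · rw [map_add, hκ1, add_zero, hw]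
    · rw [hradd, hκ2]
      abel
  choose c hc1 hc2 using hchoice
  -- the lift f
  set M : Matrix (Fin n) (Fin n) ℤ := Matrix.of (fun i j => c j i) with hM
  refine ⟨Matrix.toLin' M, ?_, ?_⟩
  · -- commutation
    have key : (π.comp (Matrix.toLin' M).toAddMonoidHom)
        = (h.toAddMonoidHom.comp π) := by
      apply AddMonoidHom.functions_ext
      intro j m
      simp only [AddMonoidHom.comp_apply, LinearMap.toAddMonoidHom_coe,
        AddEquiv.coe_toAddMonoidHom]
      have h2 : (Pi.single j m : Fin n → ℤ) = m • Pi.single j 1 := by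
        funext i
        by_cases hij : i = j
        · subst hij; simp
        · simp [Pi.single_eq_of_ne hij]
      have h3 : Matrix.toLin' M (Pi.single j 1) = c j := by
        rw [Matrix.toLin'_apply, Matrix.mulVec_single_one]
        rfl
      rw [h2, map_zsmul, h3, map_zsmul, hc1, ← map_zsmul h, ← map_zsmul π]
    intro v
    exact DFunLike.congr_fun key v
  · -- determinant
    intro hdvd
    have hdet : LinearMap.det (Matrix.toLin' M) = M.det := LinearMap.det_toLin' M
    rw [hdet] at hdvd
    have hcast : ((M.det : ℤ) : ZMod p) = 0 := by
      rwa [ZMod.intCast_zmod_eq_zero_iff_dvd]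
    have hmap : M.map (Int.castRingHom (ZMod p)) = LinearMap.toMatrix' (F : (Fin n → ZMod p) →ₗ[ZMod p] (Fin n → ZMod p)) := by
      ext i j
      have h4 : (fun j' => if j' = j then (1 : ZMod p) else 0) = Pi.single j 1 := by
        funext j'
        simp [Pi.single_apply]
      rw [LinearMap.toMatrix'_apply, Matrix.map_apply]
      show ((c j i : ℤ) : ZMod p) = F (Pi.single j 1) i
      rw [← hc2 j]
    have hdet2 : ((M.det : ℤ) : ZMod p) = LinearMap.det (F : (Fin n → ZMod p) →ₗ[ZMod p] (Fin n → ZMod p)) := by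
      calc ((M.det : ℤ) : ZMod p) = (Int.castRingHom (ZMod p)) M.det := rfl
        _ = ((Int.castRingHom (ZMod p)).mapMatrix M).det := RingHom.map_det _ _
        _ = (M.map (Int.castRingHom (ZMod p))).det := rfl
        _ = (LinearMap.toMatrix' ((F : (Fin n → ZMod p) →ₗ[ZMod p] (Fin n → ZMod p)))).det := by
              rw [hmap]
        _ = LinearMap.det ((F : (Fin n → ZMod p) →ₗ[ZMod p] (Fin n → ZMod p))) :=
              LinearMap.det_toMatrix' _
    have : IsUnit (LinearMap.det (F : (Fin n → ZMod p) →ₗ[ZMod p] (Fin n → ZMod p))) :=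
      LinearEquiv.isUnit_det' F
    rw [hcast] at hdet2
    exact this.ne_zero hdet2.symm
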